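/- Fix γ > 0, an integer m ≥ 2, reals 0 = s₀ < s₁ < … < s_m = 1 and α₁ > α₂ > … > α_m = 0, and let u, N_m, D_m be as defined. Then every complex solution w of the equation N_m(w) = D_m(w) is real, and every solution other than w = 0 lies in the real segment [ e^{−γ(u+1)}, e^{−γ(u−α₁)} ]. -/

import Mathlib

open Polynomial


lemma chainAux_le {f : ℕ → ℝ} {l m : ℕ} (h : ∀ j, l ≤ j → j < m → f j < f (j+1)) :
    ∀ i j, l ≤ i → i ≤ j → j ≤ m → f i ≤ f j := by
  intro i j hli hij hjm
  induction j, hij using Nat.le_induction with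
  | base => exact le_refl _
  | succ n hn ih => exact (ih (by omega)).trans (h n (by omega) (by omega)).le

lemma chainAux_lt {f : ℕ → ℝ} {l m : ℕ} (h : ∀ j, l ≤ j → j < m → f j < f (j+1)) :
    ∀ i j, l ≤ i → i < j → j ≤ m → f i < f j := by
  intro i j hli hij hjm
  have h1 : i + 1 ≤ j := hij
  induction j, h1 using Nat.le_induction with
  | base => exact h i hli (by omega)
  | succ n hn ih => exact (ih (by omega) (by omega)).trans (h n (by omega) (by omega))

lemma ivtAux (p : Polynomial ℝ) {x y : ℝ} (hxy : x < y)
    (hsign : p.eval x * p.eval y < 0) :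
    ∃ r ∈ Set.Ioo x y, p.eval r = 0 := by
  have hc : ContinuousOn (fun t => p.eval t) (Set.Icc x y) :=
    (Polynomial.continuous p).continuousOn
  rcases mul_neg_iff.mp hsign with ⟨hx, hy⟩ | ⟨hx, hy⟩
  · obtain ⟨r, hr, hr0⟩ := intermediate_value_Ioo' hxy.le hc ⟨hy, hx⟩
    exact ⟨r, hr, hr0⟩
  · obtain ⟨r, hr, hr0⟩ := intermediate_value_Ioo hxy.le hc ⟨hx, hy⟩
    exact ⟨r, hr, hr0⟩

lemma prodNegAux (s : Finset ℕ) (f : ℕ → ℝ) :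
    ∏ j ∈ s, (-f j) = (-1)^s.card * ∏ j ∈ s, f j := by
  rw [← Finset.prod_const, ← Finset.prod_mul_distrib]; simp

lemma key_roots (m : ℕ) (hm : 2 ≤ m) (a b : ℕ → ℝ) (a0 b0 : ℝ)
    (hb1 : 0 < b 1)
    (hab : ∀ j, 1 ≤ j → j ≤ m → a j < b j)
    (hba : ∀ j, 1 ≤ j → j < m → b j < a (j+1))
    (h40 : b 1 < a0) (h41 : a0 < b m)
    (hsum : a0 + ∑ j ∈ Finset.Icc 1 m, a j = b0 + ∑ j ∈ Finset.Icc 1 m, b j)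
    (hprod : a0 * ∏ j ∈ Finset.Icc 1 m, a j = b0 * ∏ j ∈ Finset.Icc 1 m, b j) :
    ∀ z : ℂ, (z - a0) * ∏ j ∈ Finset.Icc 1 m, (z - a j) =
        (z - b0) * ∏ j ∈ Finset.Icc 1 m, (z - b j) →
      z.im = 0 ∧ (z = 0 ∨ ((b 1 : ℝ) ≤ z.re ∧ z.re ≤ b m)) := by
  -- b is strictly increasing on [1,m]
  have hbb : ∀ j, 1 ≤ j → j < m → b j < b (j+1) :=
    fun j h1 h2 => (hba j h1 h2).trans (hab (j+1) (by omega) (by omega))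
  have bmono : ∀ i j, 1 ≤ i → i ≤ j → j ≤ m → b i ≤ b j := chainAux_le hbb
  have bstrict : ∀ i j, 1 ≤ i → i < j → j ≤ m → b i < b j := chainAux_lt hbb
  -- the polynomial F
  set A : Polynomial ℝ := (X - C a0) * ∏ j ∈ Finset.Icc 1 m, (X - C (a j)) with hA
  set B : Polynomial ℝ := (X - C b0) * ∏ j ∈ Finset.Icc 1 m, (X - C (b j)) with hB
  set F : Polynomial ℝ := A - B with hF
  have hAm : A.Monic := (monic_X_sub_C a0).mul
    (monic_prod_of_monic _ _ fun i _ => monic_X_sub_C _)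
  have hBm : B.Monic := (monic_X_sub_C b0).mul
    (monic_prod_of_monic _ _ fun i _ => monic_X_sub_C _)
  have hcard : (Finset.Icc 1 m).card = m := by
    rw [Nat.card_Icc]; omega
  have hAdeg : A.natDegree = m + 1 := by
    rw [hA, Monic.natDegree_mul (monic_X_sub_C a0)
      (monic_prod_of_monic _ _ fun i _ => monic_X_sub_C _), natDegree_X_sub_C,
      natDegree_prod_of_monic _ _ (fun i _ => monic_X_sub_C _)]
    simp [hcard]; omega
  have hBdeg : B.natDegree = m + 1 := by
    rw [hB, Monic.natDegree_mul (monic_X_sub_C b0)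
      (monic_prod_of_monic _ _ fun i _ => monic_X_sub_C _), natDegree_X_sub_C,
      natDegree_prod_of_monic _ _ (fun i _ => monic_X_sub_C _)]
    simp [hcard]; omega
  -- degree bound
  have hnextA : A.nextCoeff = -(a0 + ∑ j ∈ Finset.Icc 1 m, a j) := by
    rw [hA, Monic.nextCoeff_mul (monic_X_sub_C a0)
      (monic_prod_of_monic _ _ fun i _ => monic_X_sub_C _), nextCoeff_X_sub_C,
      prod_X_sub_C_nextCoeff]
    ring
  have hnextB : B.nextCoeff = -(b0 + ∑ j ∈ Finset.Icc 1 m, b j) := by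
    rw [hB, Monic.nextCoeff_mul (monic_X_sub_C b0)
      (monic_prod_of_monic _ _ fun i _ => monic_X_sub_C _), nextCoeff_X_sub_C,
      prod_X_sub_C_nextCoeff]
    ring
  have hcoeffm : A.coeff m = B.coeff m := by
    have h1 : A.coeff m = A.nextCoeff := by
      rw [nextCoeff_of_natDegree_pos (by omega : 0 < A.natDegree), hAdeg]; norm_num
    have h2 : B.coeff m = B.nextCoeff := by
      rw [nextCoeff_of_natDegree_pos (by omega : 0 < B.natDegree), hBdeg]; norm_num
    rw [h1, h2, hnextA, hnextB, hsum]
  have hFdeg : F.natDegree ≤ m - 1 := by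
    rw [natDegree_le_iff_coeff_eq_zero]
    intro k hk
    have hk' : m ≤ k := by omega
    rw [hF, coeff_sub]
    rcases eq_or_lt_of_le hk' with h | h
    · rw [← h, hcoeffm, sub_self]
    rcases eq_or_lt_of_le (by omega : m + 1 ≤ k) with h2 | h2
    · have hA1 : A.coeff k = 1 := by rw [← h2, ← hAdeg]; exact hAm.coeff_natDegree
      have hB1 : B.coeff k = 1 := by rw [← h2, ← hBdeg]; exact hBm.coeff_natDegree
      rw [hA1, hB1, sub_self]
    · rw [coeff_eq_zero_of_natDegree_lt (by omega : A.natDegree < k),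
        coeff_eq_zero_of_natDegree_lt (by omega : B.natDegree < k), sub_self]
  -- evaluation at b j
  have sign_eval : ∀ j, 1 ≤ j → j ≤ m →
      ∃ p : ℝ, 0 < p ∧ F.eval (b j) = (b j - a0) * ((-1)^(m - j) * p) := by
    intro j hj1 hjm
    have hBj : B.eval (b j) = 0 := by
      rw [hB, eval_mul, eval_prod]
      apply mul_eq_zero_of_right
      apply Finset.prod_eq_zero (Finset.mem_Icc.mpr ⟨hj1, hjm⟩)
      simp
    have hAj : A.eval (b j) = (b j - a0) * ∏ k ∈ Finset.Icc 1 m, (b j - a k) := by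
      rw [hA, eval_mul, eval_prod]; simp
    have hsplit : ∏ k ∈ Finset.Icc 1 m, (b j - a k)
        = (∏ k ∈ Finset.Ico 1 (j+1), (b j - a k)) *
          ∏ k ∈ Finset.Ico (j+1) (m+1), (b j - a k) := by
      rw [Finset.prod_Ico_consecutive _ (by omega : 1 ≤ j+1) (by omega : j+1 ≤ m+1),
        Finset.Ico_add_one_right_eq_Icc]
    have hP1 : 0 < ∏ k ∈ Finset.Ico 1 (j+1), (b j - a k) := by
      apply Finset.prod_pos
      intro k hk
      rw [Finset.mem_Ico] at hk
      have h1 : a k < b k := hab k hk.1 (by omega)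
      have h2 : b k ≤ b j := bmono k j hk.1 (by omega) hjm
      linarith
    have hP2 : ∏ k ∈ Finset.Ico (j+1) (m+1), (b j - a k)
        = (-1)^(m-j) * ∏ k ∈ Finset.Ico (j+1) (m+1), (a k - b j) := by
      have h := prodNegAux (Finset.Ico (j+1) (m+1)) (fun k => a k - b j)
      simp only [neg_sub] at h
      rw [h, Nat.card_Ico]
      congr 2
      omega
    have hQ : 0 < ∏ k ∈ Finset.Ico (j+1) (m+1), (a k - b j) := by
      apply Finset.prod_pos
      intro k hk
      rw [Finset.mem_Ico] at hk
      have h1 : b j ≤ b (k-1) := bmono j (k-1) hj1 (by omega) (by omega)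
      have h2 : b (k-1) < a k := by
        have h3 := hba (k-1) (by omega) (by omega)
        rwa [Nat.sub_add_cancel (by omega)] at h3
      linarith
    refine ⟨(∏ k ∈ Finset.Ico 1 (j+1), (b j - a k)) *
        ∏ k ∈ Finset.Ico (j+1) (m+1), (a k - b j), mul_pos hP1 hQ, ?_⟩
    rw [hF, eval_sub, hBj, hAj, sub_zero, hsplit, hP2]
    ring
  -- eval at 0
  have heval0 : F.eval 0 = 0 := by
    have hA0 : A.eval 0 = (-a0) * ∏ j ∈ Finset.Icc 1 m, (-(a j)) := by
      rw [hA, eval_mul, eval_prod]; simp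
    have hB0 : B.eval 0 = (-b0) * ∏ j ∈ Finset.Icc 1 m, (-(b j)) := by
      rw [hB, eval_mul, eval_prod]; simp
    rw [hF, eval_sub, hA0, hB0, prodNegAux, prodNegAux, hcard]
    linear_combination (-(-1:ℝ)^m) * hprod
  -- F ≠ 0
  have hFne : F ≠ 0 := by
    obtain ⟨p, hp, hev⟩ := sign_eval 1 le_rfl (by omega)
    intro h
    rw [h, eval_zero] at hev
    rcases mul_eq_zero.mp hev.symm with h4 | h4
    · linarith
    · rcases mul_eq_zero.mp h4 with h5 | h5
      · exact (pow_ne_zero _ (by norm_num : (-1:ℝ) ≠ 0)) h5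
      · exact hp.ne' h5
  -- root set
  have hS : ∃ S : Finset ℝ, (m - 1 : ℕ) ≤ S.card ∧
      ∀ r ∈ S, F.eval r = 0 ∧ (r = 0 ∨ (b 1 < r ∧ r < b m)) := by
    classical
    set J : Finset ℕ := Finset.Icc 1 (m-1) with hJ
    set Jg : Finset ℕ := J.filter (fun j => ¬ (b j ≤ a0 ∧ a0 ≤ b (j+1))) with hJg
    set Jb : Finset ℕ := J.filter (fun j => (b j ≤ a0 ∧ a0 ≤ b (j+1))) with hJb
    have hJcard : J.card = m - 1 := by rw [hJ, Nat.card_Icc]; omega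
    have hsplitJ : Jb.card + Jg.card = m - 1 := by
      rw [hJb, hJg, Finset.card_filter_add_card_filter_not, hJcard]
    have hJgmem : ∀ j ∈ Jg, (1 ≤ j ∧ j + 1 ≤ m) ∧ (a0 < b j ∨ b (j+1) < a0) := by
      intro j hj
      rw [hJg, Finset.mem_filter, hJ, Finset.mem_Icc] at hj
      obtain ⟨⟨hj1, hjm⟩, hgd⟩ := hj
      constructor
      · omega
      · by_contra hcon
        push_neg at hcon
        exact hgd ⟨hcon.1, hcon.2⟩
    have hgood : ∀ j ∈ Jg, ∃ r, r ∈ Set.Ioo (b j) (b (j+1)) ∧ F.eval r = 0 := by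
      intro j hj
      obtain ⟨⟨hj1, hjm⟩, hgd⟩ := hJgmem j hj
      obtain ⟨p, hp, hev⟩ := sign_eval j hj1 (by omega)
      obtain ⟨q, hq, hev'⟩ := sign_eval (j+1) (by omega) (by omega)
      have hbj : b j < b (j+1) := hbb j hj1 (by omega)
      have hsign : F.eval (b j) * F.eval (b (j+1)) < 0 := by
        have hcases : (b j - a0) * (b (j+1) - a0) > 0 := by
          rcases hgd with h | h
          · have h2 : b j < b (j+1) := hbj
            nlinarith
          · have h2 : b j < b (j+1) := hbj
            nlinarith
        have hmj : m - j = (m - (j+1)) + 1 := by omega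
        have keyeq : F.eval (b j) * F.eval (b (j+1)) =
            -(((-1:ℝ)^(m-(j+1)))^2 * (p * q * ((b j - a0) * (b (j+1) - a0)))) := by
          rw [hev, hev', hmj]; ring
        have he : ((-1:ℝ)^(m-(j+1)))^2 = 1 := by
          rw [← pow_mul, mul_comm, pow_mul]; norm_num
        rw [keyeq, he, one_mul]
        have : 0 < p * q * ((b j - a0) * (b (j+1) - a0)) :=
          mul_pos (mul_pos hp hq) hcases
        linarith
      obtain ⟨r, hr, hr0⟩ := ivtAux F hbj hsign
      exact ⟨r, hr, hr0⟩
    have hex : ∀ j : ℕ, ∃ r : ℝ, j ∈ Jg → (r ∈ Set.Ioo (b j) (b (j+1)) ∧ F.eval r = 0) := by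
      intro j
      by_cases h : j ∈ Jg
      · obtain ⟨r, hr⟩ := hgood j h; exact ⟨r, fun _ => hr⟩
      · exact ⟨0, fun h' => absurd h' h⟩
    choose g hg using hex
    have hginj : Set.InjOn g Jg := by
      intro i hi j hj hij
      have hi' : i ∈ Jg := hi
      have hj' : j ∈ Jg := hj
      have key : ∀ x y, x ∈ Jg → y ∈ Jg → x < y → g x < g y := by
        intro x y hx hy hxy
        obtain ⟨⟨hx1, hxm⟩, _⟩ := hJgmem x hx
        obtain ⟨⟨hy1, hym⟩, _⟩ := hJgmem y hy
        have h1 : g x < b (x+1) := (hg x hx).1.2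
        have h2 : b y < g y := (hg y hy).1.1
        have h3 : b (x+1) ≤ b y := bmono (x+1) y (by omega) (by omega) (by omega)
        linarith
      rcases lt_trichotomy i j with h | h | h
      · exact absurd hij (key i j hi' hj' h).ne
      · exact h
      · exact absurd hij.symm (key j i hj' hi' h).ne
    have himgcard : (Jg.image g).card = Jg.card := Finset.card_image_of_injOn hginj
    have himgprop : ∀ r ∈ Jg.image g, F.eval r = 0 ∧ (b 1 < r ∧ r < b m) := by
      intro r hr
      obtain ⟨j, hj, rfl⟩ := Finset.mem_image.mp hr
      obtain ⟨⟨hj1, hjm⟩, _⟩ := hJgmem j hj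
      obtain ⟨⟨hlo, hhi⟩, hz⟩ := hg j hj
      refine ⟨hz, ?_, ?_⟩
      · exact lt_of_le_of_lt (bmono 1 j le_rfl hj1 (by omega)) hlo
      · exact lt_of_lt_of_le hhi (bmono (j+1) m (by omega) (by omega) le_rfl)
    have h0img : (0:ℝ) ∉ Jg.image g := by
      intro h
      obtain ⟨_, h1, _⟩ := himgprop 0 h
      linarith
    by_cases hcase : ∃ t, 1 ≤ t ∧ t ≤ m ∧ a0 = b t
    · obtain ⟨t, ht1, htm, hteq⟩ := hcase
      have ht2 : 2 ≤ t := by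
        rcases eq_or_lt_of_le ht1 with h | h
        · exfalso; rw [hteq] at h40; rw [← h] at h40; exact lt_irrefl _ h40
        · omega
      have htm1 : t ≤ m - 1 := by
        rcases eq_or_lt_of_le htm with h | h
        · exfalso; rw [hteq, h] at h41; exact lt_irrefl _ h41
        · omega
      have hJbsub : Jb ⊆ {t-1, t} := by
        intro j hj
        rw [hJb, Finset.mem_filter, hJ, Finset.mem_Icc] at hj
        obtain ⟨⟨hj1, hjm⟩, hble, hble'⟩ := hj
        have h1 : j ≤ t := by
          by_contra h
          have hlt : b t < b j := bstrict t j ht1 (by omega) (by omega)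
          rw [← hteq] at hlt; linarith
        have h2 : t ≤ j + 1 := by
          by_contra h
          have hlt : b (j+1) < b t := bstrict (j+1) t (by omega) (by omega) htm
          rw [← hteq] at hlt; linarith
        simp only [Finset.mem_insert, Finset.mem_singleton]
        omega
      have hJbcard : Jb.card ≤ 2 := by
        refine (Finset.card_le_card hJbsub).trans ?_
        refine (Finset.card_insert_le _ _).trans ?_
        simp
      have hroot_t : F.eval (b t) = 0 := by
        obtain ⟨p, hp, hev⟩ := sign_eval t ht1 htm
        rw [hev, hteq, sub_self, zero_mul]
      have hbtpos : 0 < b t := lt_of_lt_of_le hb1 (bmono 1 t le_rfl ht1 htm)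
      have hbtnotin : b t ∉ Jg.image g := by
        intro h
        obtain ⟨j, hj, hjeq⟩ := Finset.mem_image.mp h
        obtain ⟨⟨hj1, hjm⟩, hgd⟩ := hJgmem j hj
        obtain ⟨⟨hlo, hhi⟩, _⟩ := hg j hj
        rcases hgd with h' | h'
        · rw [hteq] at h'
          have : b t < b t := by calc b t < b j := h'
                                     _ < g j := hlo
                                     _ = b t := hjeq
          exact lt_irrefl _ this
        · rw [hteq] at h'
          have : b t < b t := by calc b t = g j := hjeq.symm
                                     _ < b (j+1) := hhi
                                     _ < b t := h'
          exact lt_irrefl _ this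
      have h0notin : (0:ℝ) ∉ insert (b t) (Jg.image g) := by
        simp only [Finset.mem_insert]
        push_neg
        exact ⟨hbtpos.ne, h0img⟩
      refine ⟨insert 0 (insert (b t) (Jg.image g)), ?_, ?_⟩
      · rw [Finset.card_insert_of_notMem h0notin,
          Finset.card_insert_of_notMem hbtnotin, himgcard]
        omega
      · intro r hr
        rcases Finset.mem_insert.mp hr with rfl | hr
        · exact ⟨heval0, Or.inl rfl⟩
        rcases Finset.mem_insert.mp hr with rfl | hr
        · refine ⟨hroot_t, Or.inr ⟨?_, ?_⟩⟩
          · exact bstrict 1 t le_rfl (by omega) htm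
          · exact bstrict t m ht1 (by omega) le_rfl
        · obtain ⟨hz, h1, h2⟩ := himgprop r hr
          exact ⟨hz, Or.inr ⟨h1, h2⟩⟩
    · push_neg at hcase
      have hJbcard : Jb.card ≤ 1 := by
        rw [Finset.card_le_one]
        intro i hi j hj
        rw [hJb, Finset.mem_filter, hJ, Finset.mem_Icc] at hi hj
        obtain ⟨⟨hi1, him⟩, hia, hia'⟩ := hi
        obtain ⟨⟨hj1, hjm⟩, hja, hja'⟩ := hj
        by_contra hne
        have keybad : ∀ x y, 1 ≤ x → x ≤ m-1 → 1 ≤ y → y ≤ m-1 →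
            x < y → b x ≤ a0 → a0 ≤ b (x+1) → b y ≤ a0 → False := by
          intro x y hx1 hxm hy1 hym hxy hbx hbx' hby
          have h1 : b (x+1) ≤ b y := bmono (x+1) y (by omega) (by omega) (by omega)
          have h2 : a0 = b y := le_antisymm (hbx'.trans h1) hby
          exact hcase y hy1 (by omega) h2
        rcases lt_trichotomy i j with h | h | h
        · exact absurd (keybad i j hi1 him hj1 hjm h hia hia' hja) not_false
        · exact hne h
        · exact absurd (keybad j i hj1 hjm hi1 him h hja hja' hia) not_false
      refine ⟨insert 0 (Jg.image g), ?_, ?_⟩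
      · rw [Finset.card_insert_of_notMem h0img, himgcard]
        omega
      · intro r hr
        rcases Finset.mem_insert.mp hr with rfl | hr
        · exact ⟨heval0, Or.inl rfl⟩
        · obtain ⟨hz, h1, h2⟩ := himgprop r hr
          exact ⟨hz, Or.inr ⟨h1, h2⟩⟩
  obtain ⟨S, hScard, hSprop⟩ := hS
  have hSsub : S ⊆ F.roots.toFinset := by
    intro r hr
    rw [Multiset.mem_toFinset, Polynomial.mem_roots']
    exact ⟨hFne, (hSprop r hr).1⟩
  have hcard1 : F.roots.toFinset.card ≤ Multiset.card F.roots :=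
    Multiset.toFinset_card_le _
  have hcard2 : Multiset.card F.roots ≤ F.natDegree := Polynomial.card_roots' F
  have hcard3 : (m - 1 : ℕ) ≤ F.roots.toFinset.card :=
    le_trans hScard (Finset.card_le_card hSsub)
  have hrootscard : Multiset.card F.roots = F.natDegree := by omega
  have hSeq : S = F.roots.toFinset :=
    Finset.eq_of_subset_of_card_le hSsub (by omega)
  have hfact := Polynomial.C_leadingCoeff_mul_prod_multiset_X_sub_C (p := F) hrootscard
  intro z hz
  have expand : ∀ (c0 : ℝ) (c : ℕ → ℝ),
      (Polynomial.aeval z) ((X - C c0) * ∏ j ∈ Finset.Icc 1 m, (X - C (c j)))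
        = (z - c0) * ∏ j ∈ Finset.Icc 1 m, (z - c j) := by
    intro c0 c
    rw [map_mul, map_prod]
    simp
  have hev0 : (Polynomial.aeval z) F = 0 := by
    rw [hF, map_sub, hA, hB, expand, expand, hz, sub_self]
  have hev1 : (Polynomial.aeval z) F =
      (F.leadingCoeff : ℂ) * (F.roots.map (fun r : ℝ => z - (r:ℂ))).prod := by
    conv_lhs => rw [← hfact]
    rw [map_mul, Polynomial.aeval_C, map_multiset_prod, Multiset.map_map]
    congr 1
    congr 1
    apply Multiset.map_congr rfl
    intro r _
    simp
  rw [hev1] at hev0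
  have hlc : (F.leadingCoeff : ℂ) ≠ 0 := by
    simpa using Polynomial.leadingCoeff_ne_zero.mpr hFne
  have hprod0 : (F.roots.map (fun r : ℝ => z - (r:ℂ))).prod = 0 := by
    rcases mul_eq_zero.mp hev0 with h | h
    · exact absurd h hlc
    · exact h
  have h0mem : (0:ℂ) ∈ F.roots.map (fun r : ℝ => z - (r:ℂ)) :=
    Multiset.prod_eq_zero_iff.mp hprod0
  obtain ⟨r, hrmem, hrz⟩ := Multiset.mem_map.mp h0mem
  have hzr : z = (r : ℂ) := by
    have := sub_eq_zero.mp hrz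
    exact this
  have hrS : r ∈ S := by rw [hSeq]; exact Multiset.mem_toFinset.mpr hrmem
  obtain ⟨_, hloc⟩ := hSprop r hrS
  constructor
  · rw [hzr]; exact Complex.ofReal_im r
  · rcases hloc with rfl | ⟨h1, h2⟩
    · left; rw [hzr]; exact Complex.ofReal_zero
    · right
      rw [hzr]
      simp only [Complex.ofReal_re]
      exact ⟨h1.le, h2.le⟩

lemma teleAux (f : ℕ → ℝ) (m : ℕ) :
    ∑ j ∈ Finset.Icc 1 m, (f j - f (j-1)) = f m - f 0 := by
  rw [← Finset.Ico_add_one_right_eq_Icc, Finset.sum_Ico_eq_sum_range]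
  calc ∑ i ∈ Finset.range (m+1-1), (f (1+i) - f (1+i-1))
      = ∑ i ∈ Finset.range m, (f (i+1) - f i) := by
        apply Finset.sum_congr (by congr 1)
        intro i _
        congr 1 <;> [skip; skip] <;> congr 1 <;> omega
   _ = f m - f 0 := Finset.sum_range_sub f m
open MeasureTheory Filter Set
open scoped Topology

/-- The global location for the piecewise-constant profile given by the data
`0 = s₀ < s₁ < … < s_m = 1`, `α₁ > … > α_m = 0`:
`u = (1/γ) log( (e^γ − 1) / Σ_{j=1}^m (e^{γ(s_j − α_j)} − e^{γ(s_{j−1} − α_j)}) )`. -/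
noncomputable def uPW (γ : ℝ) (m : ℕ) (s α : ℕ → ℝ) : ℝ :=
  (1/γ) * Real.log ((Real.exp γ - 1) /
    ∑ j ∈ Finset.Icc 1 m,
      (Real.exp (γ*(s j - α j)) - Real.exp (γ*(s (j-1) - α j))))

set_option maxHeartbeats 2000000 in
/-- all complex solutions of `N_m(w) = D_m(w)` are real, and all solutions other
than `w = 0` lie in the real segment `[e^{−γ(u+1)}, e^{−γ(u−α₁)}]`. -/
theorem roots_of_Nm_eq_Dm_real_and_located
    (γ : ℝ) (hγ : 0 < γ) (m : ℕ) (hm : 2 ≤ m) (s α : ℕ → ℝ)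
    (hs0 : s 0 = 0) (hsm : s m = 1)
    (hs : ∀ j < m, s j < s (j+1))
    (hα : ∀ j, 1 ≤ j → j < m → α (j+1) < α j)
    (hαm : α m = 0) :
    ∀ w : ℂ,
      (1 - w * (Real.exp γ : ℂ)) *
          ∏ j ∈ Finset.Icc 1 m,
            (1 - w * (Real.exp (γ*(uPW γ m s α - α j + s (j-1))) : ℂ)) =
        (1 - w) *
          ∏ j ∈ Finset.Icc 1 m,
            (1 - w * (Real.exp (γ*(uPW γ m s α - α j + s j)) : ℂ)) →
      w.im = 0 ∧
      (w ≠ 0 →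
        Real.exp (-γ*(uPW γ m s α + 1)) ≤ w.re ∧
        w.re ≤ Real.exp (-γ*(uPW γ m s α - α 1))) := by
  set u : ℝ := uPW γ m s α with hu
  set a : ℕ → ℝ := fun j => Real.exp (γ*(u - α j + s (j-1))) with ha
  set b : ℕ → ℝ := fun j => Real.exp (γ*(u - α j + s j)) with hb
  have hcardIcc : (Finset.Icc 1 m).card = m := by rw [Nat.card_Icc]; omega
  -- monotonicity facts
  have hs' : ∀ j, 0 ≤ j → j < m → s j < s (j+1) := fun j _ hj => hs j hj
  have slt : ∀ i j, i < j → j ≤ m → s i < s j :=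
    fun i j hij hjm => chainAux_lt (l := 0) hs' i j (Nat.zero_le _) hij hjm
  have αle : ∀ i j, 1 ≤ i → i ≤ j → j ≤ m → α j ≤ α i := by
    intro i j h1 h2 h3
    have := chainAux_le (f := fun j => -α j) (l := 1) (m := m)
      (fun j hj1 hjm => neg_lt_neg (hα j hj1 hjm)) i j h1 h2 h3
    linarith
  have αlt : ∀ i j, 1 ≤ i → i < j → j ≤ m → α j < α i := by
    intro i j h1 h2 h3
    have := chainAux_lt (f := fun j => -α j) (l := 1) (m := m)
      (fun j hj1 hjm => neg_lt_neg (hα j hj1 hjm)) i j h1 h2 h3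
    linarith
  have hα1 : 0 < α 1 := by
    have := αlt 1 m le_rfl (by omega) le_rfl
    rw [hαm] at this; linarith
  have hs1 : 0 < s 1 := by
    have := slt 0 1 (by omega) (by omega); rw [hs0] at this; linarith
  have hs1' : s 1 < 1 := by
    have := slt 1 m (by omega) le_rfl; rw [hsm] at this; linarith
  -- the sum S
  set S : ℝ := ∑ j ∈ Finset.Icc 1 m,
      (Real.exp (γ*(s j - α j)) - Real.exp (γ*(s (j-1) - α j))) with hSdef
  have hSpos : 0 < S := by
    apply Finset.sum_pos
    · intro j hj
      rw [Finset.mem_Icc] at hj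
      have h1 : s (j-1) < s j := slt (j-1) j (by omega) hj.2
      have h2 : γ*(s (j-1) - α j) < γ*(s j - α j) :=
        mul_lt_mul_of_pos_left (by linarith) hγ
      exact sub_pos.mpr (Real.exp_lt_exp.mpr h2)
    · exact Finset.nonempty_Icc.mpr (by omega)
  have hexp1 : 1 < Real.exp γ := by
    rw [← Real.exp_zero]; exact Real.exp_lt_exp.mpr hγ
  -- the defining identity of u
  have huexp : Real.exp (γ * u) = (Real.exp γ - 1) / S := by
    rw [hu, uPW, ← hSdef]
    rw [show γ * (1/γ * Real.log ((Real.exp γ - 1)/S)) = Real.log ((Real.exp γ - 1)/S) by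
      field_simp]
    exact Real.exp_log (div_pos (by linarith) hSpos)
  -- b j - a j identity
  have hbma : ∀ j ∈ Finset.Icc 1 m, b j - a j =
      Real.exp (γ * u) * (Real.exp (γ*(s j - α j)) - Real.exp (γ*(s (j-1) - α j))) := by
    intro j _
    rw [ha, hb]
    simp only
    rw [show γ*(u - α j + s j) = γ*u + γ*(s j - α j) by ring,
      show γ*(u - α j + s (j-1)) = γ*u + γ*(s (j-1) - α j) by ring,
      Real.exp_add, Real.exp_add]
    ring
  have hsum_id : ∑ j ∈ Finset.Icc 1 m, (b j - a j) = Real.exp γ - 1 := by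
    rw [Finset.sum_congr rfl hbma, ← Finset.mul_sum, ← hSdef, huexp]
    field_simp
  -- telescoping
  have htel : ∑ j ∈ Finset.Icc 1 m, (Real.exp (γ * s j) - Real.exp (γ * s (j-1)))
      = Real.exp γ - 1 := by
    have h := teleAux (fun j => Real.exp (γ * s j)) m
    rw [h, hsm, hs0]
    norm_num
  -- per-term factorization of S terms
  have hterm : ∀ j, Real.exp (γ*(s j - α j)) - Real.exp (γ*(s (j-1) - α j))
      = Real.exp (-(γ * α j)) * (Real.exp (γ * s j) - Real.exp (γ * s (j-1))) := by
    intro j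
    rw [show γ*(s j - α j) = -(γ * α j) + γ * s j by ring,
      show γ*(s (j-1) - α j) = -(γ * α j) + γ * s (j-1) by ring,
      Real.exp_add, Real.exp_add]
    ring
  -- u > 0
  have hupos : 0 < u := by
    have hSlt : S < Real.exp γ - 1 := by
      rw [hSdef, ← htel]
      apply Finset.sum_lt_sum
      · intro j hj
        rw [Finset.mem_Icc] at hj
        have hαj : 0 ≤ α j := by
          have := αle j m hj.1 hj.2 le_rfl; rw [hαm] at this; linarith
        have hE : Real.exp (-(γ * α j)) ≤ 1 := by
          rw [← Real.exp_zero]; exact Real.exp_le_exp.mpr (by nlinarith)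
        have hD : 0 ≤ Real.exp (γ * s j) - Real.exp (γ * s (j-1)) := by
          have := slt (j-1) j (by omega) hj.2
          have := Real.exp_le_exp.mpr (mul_le_mul_of_nonneg_left this.le hγ.le)
          linarith
        rw [hterm j]
        nlinarith [Real.exp_pos (-(γ * α j))]
      · refine ⟨1, Finset.mem_Icc.mpr ⟨le_rfl, by omega⟩, ?_⟩
        have hE : Real.exp (-(γ * α 1)) < 1 := by
          rw [← Real.exp_zero]; exact Real.exp_lt_exp.mpr (by nlinarith)
        have hD : 0 < Real.exp (γ * s 1) - Real.exp (γ * s 0) := by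
          have h1 : s 0 < s 1 := by rw [hs0]; exact hs1
          have := Real.exp_lt_exp.mpr (mul_lt_mul_of_pos_left h1 hγ)
          linarith
        rw [hterm 1]
        simp only [Nat.sub_self]
        nlinarith
    have h1 : 1 < Real.exp (γ * u) := by
      rw [huexp]
      rw [one_lt_div hSpos]
      exact hSlt
    have h2 : 0 < γ * u := by
      by_contra h
      push_neg at h
      have := Real.exp_le_exp.mpr h
      rw [Real.exp_zero] at this
      linarith
    nlinarith
  -- packing: u - α 1 + s 1 < 1
  have hpack : u - α 1 + s 1 < 1 := by
    by_contra hcon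
    push_neg at hcon
    set L : ℝ := u - α 1 with hL
    have hLpos : 0 < L := by rw [hL]; linarith
    have hlow : ∀ j ∈ Finset.Icc 1 m,
        Real.exp (γ * L) * (Real.exp (γ * s j) - Real.exp (γ * s (j-1))) ≤ b j - a j := by
      intro j hj
      rw [Finset.mem_Icc] at hj
      have hfac : b j - a j =
          Real.exp (γ * (u - α j)) * (Real.exp (γ * s j) - Real.exp (γ * s (j-1))) := by
        rw [ha, hb]
        simp only
        rw [show γ*(u - α j + s j) = γ*(u - α j) + γ * s j by ring,
          show γ*(u - α j + s (j-1)) = γ*(u - α j) + γ * s (j-1) by ring,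
          Real.exp_add, Real.exp_add]
        ring
      rw [hfac]
      have hαj : α j ≤ α 1 := αle 1 j le_rfl hj.1 hj.2
      have hEE : Real.exp (γ * L) ≤ Real.exp (γ * (u - α j)) :=
        Real.exp_le_exp.mpr (by rw [hL]; nlinarith)
      have hD : 0 ≤ Real.exp (γ * s j) - Real.exp (γ * s (j-1)) := by
        have := slt (j-1) j (by omega) hj.2
        have := Real.exp_le_exp.mpr (mul_le_mul_of_nonneg_left this.le hγ.le)
        linarith
      nlinarith
    have hsum_low : Real.exp (γ * L) * (Real.exp γ - 1) ≤ Real.exp γ - 1 := by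
      calc Real.exp (γ * L) * (Real.exp γ - 1)
          = ∑ j ∈ Finset.Icc 1 m,
              Real.exp (γ * L) * (Real.exp (γ * s j) - Real.exp (γ * s (j-1))) := by
            rw [← Finset.mul_sum, htel]
        _ ≤ ∑ j ∈ Finset.Icc 1 m, (b j - a j) := Finset.sum_le_sum hlow
        _ = Real.exp γ - 1 := hsum_id
    have hE1 : Real.exp (γ * L) ≤ 1 := by nlinarith
    have : γ * L ≤ 0 := by
      by_contra h
      push_neg at h
      have := Real.exp_lt_exp.mpr h
      rw [Real.exp_zero] at this
      linarith
    nlinarith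
  -- apply the key lemma
  have hkey := key_roots m hm a b (Real.exp γ) 1
    (by rw [hb]; exact Real.exp_pos _)
    (by
      intro j h1 h2
      rw [ha, hb]
      simp only
      apply Real.exp_lt_exp.mpr
      apply mul_lt_mul_of_pos_left _ hγ
      have := slt (j-1) j (by omega) h2
      linarith)
    (by
      intro j h1 h2
      rw [ha, hb]
      simp only [Nat.add_sub_cancel]
      apply Real.exp_lt_exp.mpr
      apply mul_lt_mul_of_pos_left _ hγ
      have := hα j h1 h2
      linarith)
    (by
      rw [hb]
      simp only
      have : γ * (u - α 1 + s 1) < γ := by nlinarith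
      calc Real.exp (γ * (u - α 1 + s 1)) < Real.exp γ := Real.exp_lt_exp.mpr this)
    (by
      rw [hb]
      simp only
      apply Real.exp_lt_exp.mpr
      rw [hαm, hsm]
      nlinarith)
    (by
      have h := hsum_id
      rw [Finset.sum_sub_distrib] at h
      linarith)
    (by
      rw [ha, hb, one_mul]
      simp only
      rw [← Real.exp_sum, ← Real.exp_sum, ← Real.exp_add]
      congr 1
      have h2 := teleAux (fun k => γ * s k) m
      rw [hsm, hs0] at h2
      have h3 : ∑ j ∈ Finset.Icc 1 m, (γ*(u - α j + s j) - γ*(u - α j + s (j-1)))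
          = ∑ j ∈ Finset.Icc 1 m, (γ * s j - γ * s (j-1)) :=
        Finset.sum_congr rfl (fun j _ => by ring)
      rw [Finset.sum_sub_distrib, Finset.sum_sub_distrib] at h3
      rw [Finset.sum_sub_distrib] at h2
      linarith)
  -- now the main argument
  intro w hw
  by_cases hw0 : w = 0
  · subst hw0
    exact ⟨by simp, fun h => absurd rfl h⟩
  · set z : ℂ := w⁻¹ with hz
    have hwz : w * z = 1 := mul_inv_cancel₀ hw0
    have hfac : ∀ c : ℝ, 1 - w * (c:ℂ) = w * (z - (c:ℂ)) := by
      intro c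
      rw [mul_sub, hwz]
    have hL : (1 - w * (Real.exp γ : ℂ)) *
        ∏ j ∈ Finset.Icc 1 m, (1 - w * ((Real.exp (γ*(u - α j + s (j-1)))):ℂ))
        = w^(m+1) * ((z - ((Real.exp γ : ℝ):ℂ)) *
            ∏ j ∈ Finset.Icc 1 m, (z - ((a j : ℝ):ℂ))) := by
      rw [hfac, ha]
      simp only
      rw [Finset.prod_congr rfl (fun j _ => hfac (Real.exp (γ*(u - α j + s (j-1)))))]
      rw [Finset.prod_mul_distrib, Finset.prod_const, hcardIcc]
      ring
    have hR : (1 - w) *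
        ∏ j ∈ Finset.Icc 1 m, (1 - w * ((Real.exp (γ*(u - α j + s j))):ℂ))
        = w^(m+1) * ((z - ((1:ℝ):ℂ)) *
            ∏ j ∈ Finset.Icc 1 m, (z - ((b j : ℝ):ℂ))) := by
      have h1 : (1 : ℂ) - w = 1 - w * ((1:ℝ):ℂ) := by simp
      rw [h1, hfac, hb]
      simp only
      rw [Finset.prod_congr rfl (fun j _ => hfac (Real.exp (γ*(u - α j + s j))))]
      rw [Finset.prod_mul_distrib, Finset.prod_const, hcardIcc]
      ring
    rw [hL, hR] at hw
    have hw' := mul_left_cancel₀ (pow_ne_zero (m+1) hw0) hw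
    obtain ⟨him, hloc⟩ := hkey z hw'
    have hzne : z ≠ 0 := inv_ne_zero hw0
    rcases hloc with h0 | ⟨h1, h2⟩
    · exact absurd h0 hzne
    have hb1pos : 0 < b 1 := by rw [hb]; exact Real.exp_pos _
    have hzpos : 0 < z.re := lt_of_lt_of_le hb1pos h1
    have hzre : z = ((z.re : ℝ) : ℂ) := by
      apply Complex.ext
      · simp
      · simp [him]
    have hwre : w = ((z.re⁻¹ : ℝ) : ℂ) := by
      have hw' : w = z⁻¹ := by rw [hz, inv_inv]
      rw [hw', Complex.ofReal_inv]
      exact congrArg Inv.inv hzre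
    constructor
    · rw [hwre]; exact Complex.ofReal_im _
    · intro _
      have hwre' : w.re = z.re⁻¹ := by rw [hwre]; exact Complex.ofReal_re _
      constructor
      · rw [hwre']
        have hbm : b m = Real.exp (γ*(u + 1)) := by
          rw [hb]; simp only; rw [hαm, hsm]; ring_nf
        have hinv : (b m)⁻¹ ≤ z.re⁻¹ := by
          apply inv_anti₀ hzpos h2
        rw [show -γ*(u+1) = -(γ*(u+1)) by ring, Real.exp_neg, ← hbm]
        exact hinv
      · rw [hwre']
        have hinv : z.re⁻¹ ≤ (b 1)⁻¹ := inv_anti₀ hb1pos h1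
        have hb1 : (b 1)⁻¹ = Real.exp (-(γ*(u - α 1 + s 1))) := by
          rw [hb]; simp only; rw [Real.exp_neg]
        have hle : Real.exp (-(γ*(u - α 1 + s 1))) ≤ Real.exp (-γ*(u - α 1)) := by
          apply Real.exp_le_exp.mpr
          nlinarith
        calc z.re⁻¹ ≤ (b 1)⁻¹ := hinv
          _ = Real.exp (-(γ*(u - α 1 + s 1))) := hb1
          _ ≤ Real.exp (-γ*(u - α 1)) := hle
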